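/- Let m ≥ 1, n = 2m, ρ = e^{2πi/n}, ν = m. Let d_0,…,d_{2m−1} be distinct integers in {0,…,2m−1}, and let a_j, b_j ∈ ℂ satisfy b_j = 0 and a_j ≠ 0 for j < m, and a_j = 0 and b_j ≠ 0 for j ≥ m (almost separated conditions). Let Ŵ be the n×n matrix with rows (a_j, ρ^{d_j}a_j, …, ρ^{(m−1)d_j}a_j, ρ^{m d_j}b_j, …, ρ^{(2m−1)d_j}b_j), assumed invertible, let A_{j+1,k+1} = a_j ρ^{k d_j}, and let P be given by P_{αβ} = 1/(ρ^{β−α}−1) for α > m ≥ β and 0 otherwise. Then tr(P·Ŵ^{-1}·A) = Σ_{j=0}^{m−1} d_j − m(2m−1)/2. -/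

import Mathlib

open Complex Matrix Finset

lemma weight_aux (x : ℂ) (N : ℕ) : (x - 1) * ∑ s ∈ Finset.range N, (s : ℂ) * x ^ s
    = ((N : ℂ) - 1) * x ^ N + 1 - ∑ s ∈ Finset.range N, x ^ s := by
  induction N with
  | zero => simp
  | succ n ih =>
    rw [Finset.sum_range_succ, Finset.sum_range_succ (f := fun s => x ^ s)]
    push_cast
    linear_combination ih

theorem separated_even_trace (m : ℕ) (hm : 1 ≤ m)
    (ρ : ℂ) (hρ : ρ = Complex.exp (2 * Real.pi * Complex.I / (2 * m)))
    (d : Fin (2 * m) → ℕ) (hd : Function.Injective d) (hdlt : ∀ j, d j < 2 * m)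
    (a b : Fin (2 * m) → ℂ)
    (hab : ∀ j : Fin (2 * m),
      ((j : ℕ) < m → b j = 0 ∧ a j ≠ 0) ∧ (m ≤ (j : ℕ) → a j = 0 ∧ b j ≠ 0))
    (W A P : Matrix (Fin (2 * m)) (Fin (2 * m)) ℂ)
    (hW : ∀ j k : Fin (2 * m), W j k =
      if (k : ℕ) < m then a j * ρ ^ ((k : ℕ) * d j) else b j * ρ ^ ((k : ℕ) * d j))
    (hWinv : IsUnit W.det)
    (hA : ∀ j k : Fin (2 * m), A j k = a j * ρ ^ ((k : ℕ) * d j))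
    (hP : ∀ α β : Fin (2 * m), P α β =
      if m ≤ (α : ℕ) ∧ (β : ℕ) < m then 1 / (ρ ^ ((β : ℤ) - (α : ℤ)) - 1) else 0) :
    Matrix.trace (P * W⁻¹ * A)
      = (∑ j ∈ Finset.univ.filter (fun j : Fin (2 * m) => (j : ℕ) < m), (d j : ℂ))
          - m * (2 * m - 1) / 2 := by
  -- basic facts about ρ
  have hprim : IsPrimitiveRoot ρ (2 * m) := by
    rw [hρ]
    have h := Complex.isPrimitiveRoot_exp (2 * m) (by omega)
    convert h using 3
    push_cast; ring
  have hρ0 : ρ ≠ 0 := hprim.ne_zero (by omega)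
  have hone : ρ ^ (2 * m) = 1 := hprim.pow_eq_one
  have hone' : ∀ k : ℕ, ρ ^ (2 * m * k) = 1 := fun k => by rw [pow_mul, hone, one_pow]
  have hne1 : ∀ t : ℕ, 0 < t → t < 2 * m → ρ ^ t ≠ 1 :=
    fun t h1 h2 => hprim.pow_ne_one_of_pos_of_lt h1.ne' h2
  have hm1 : ρ ^ m = -1 := by
    have hsq : (ρ ^ m - 1) * (ρ ^ m + 1) = 0 := by
      have h2 : ρ ^ m * ρ ^ m = 1 := by
        rw [← pow_add, show m + m = 2 * m by ring, hone]
      linear_combination h2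
    rcases mul_eq_zero.1 hsq with h | h
    · exact absurd (sub_eq_zero.1 h) (hne1 m (by omega) (by omega))
    · exact eq_neg_of_add_eq_zero_left h
  have hρm_pow : ∀ t : ℕ, ρ ^ (t * m) = (-1 : ℂ) ^ t := by
    intro t; rw [mul_comm, pow_mul, hm1]
  have hmod : ∀ t : ℕ, ¬ (2 * m ∣ t) → ρ ^ t ≠ 1 := by
    intro t hdvd
    have hrw : ρ ^ t = ρ ^ (t % (2 * m)) := by
      conv_lhs => rw [← Nat.div_add_mod t (2 * m)]
      rw [pow_add, hone', one_mul]
    rw [hrw]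
    refine hne1 _ (Nat.pos_of_ne_zero ?_) (Nat.mod_lt _ (by omega))
    intro h0
    exact hdvd (Nat.dvd_of_mod_eq_zero h0)
  have hgeomsum : ∀ t : ℕ, ¬ (2 * m ∣ t) → 2 ∣ t →
      (∑ i ∈ Finset.range m, (ρ ^ t) ^ i) = 0 := by
    intro t hdd he
    rw [geom_sum_eq (hmod t hdd)]
    obtain ⟨k, hk⟩ := he
    have hx : (ρ ^ t) ^ m = 1 := by
      rw [← pow_mul, hk, show 2 * k * m = 2 * m * k by ring, hone']
    rw [hx]; simp
  have hweight : ∀ t : ℕ, ¬ (2 * m ∣ t) →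
      (∑ s ∈ Finset.range (2 * m), (s : ℂ) * (ρ ^ t) ^ s) = (2 * m : ℂ) / (ρ ^ t - 1) := by
    intro t hdd
    have hx1 : ρ ^ t ≠ 1 := hmod t hdd
    have hxn : (ρ ^ t) ^ (2 * m) = 1 := by
      rw [← pow_mul, show t * (2 * m) = 2 * m * t by ring, hone']
    have hG : (∑ s ∈ Finset.range (2 * m), (ρ ^ t) ^ s) = 0 := by
      rw [geom_sum_eq hx1, hxn]; simp
    have hw := weight_aux (ρ ^ t) (2 * m)
    rw [hG, hxn] at hw
    rw [eq_div_iff (sub_ne_zero.2 hx1)]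
    push_cast at hw ⊢
    linear_combination hw
  -- sum splitting helpers
  have hsum_lt : ∀ f : ℕ → ℂ, (∑ y : Fin (2*m), (if (y:ℕ) < m then f (y:ℕ) else 0))
      = ∑ i ∈ Finset.range m, f i := by
    intro f
    rw [Fin.sum_univ_eq_sum_range (fun i => if i < m then f i else 0)]
    rw [Finset.range_eq_Ico, ← Finset.sum_Ico_consecutive _ (Nat.zero_le m) (by omega : m ≤ 2*m)]
    have h2 : ∑ i ∈ Finset.Ico m (2*m), (if i < m then f i else 0) = 0 :=
      Finset.sum_eq_zero fun i hi => by
        rw [if_neg]; exact Nat.not_lt.2 (Finset.mem_Ico.1 hi).1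
    rw [h2, add_zero, ← Finset.range_eq_Ico]
    exact Finset.sum_congr rfl fun i hi => if_pos (Finset.mem_range.1 hi)
  have hsum_ge : ∀ f : ℕ → ℂ, (∑ y : Fin (2*m), (if m ≤ (y:ℕ) then f (y:ℕ) else 0))
      = ∑ i ∈ Finset.range m, f (m + i) := by
    intro f
    rw [Fin.sum_univ_eq_sum_range (fun i => if m ≤ i then f i else 0)]
    rw [Finset.range_eq_Ico, ← Finset.sum_Ico_consecutive _ (Nat.zero_le m) (by omega : m ≤ 2*m)]
    have h1 : ∑ i ∈ Finset.Ico 0 m, (if m ≤ i then f i else 0) = 0 :=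
      Finset.sum_eq_zero fun i hi => by
        rw [if_neg]; exact Nat.not_le.2 (Finset.mem_Ico.1 hi).2
    rw [h1, zero_add, Finset.sum_Ico_eq_sum_range]
    have h3 : 2*m - m = m := by omega
    rw [h3]
    exact Finset.sum_congr rfl fun i hi => if_pos (by omega)
  set B := W⁻¹ * A with hB
  set Dset : Finset ℕ := Finset.image d (Finset.univ.filter fun j : Fin (2*m) => (j:ℕ) < m)
    with hDset
  -- the key computation for each frequency s
  have hT : ∀ s ∈ Finset.range (2*m),
      (∑ x : Fin (2*m), ∑ y : Fin (2*m),
        (if m ≤ (x:ℕ) ∧ (y:ℕ) < m then ρ^(s*(y:ℕ)) * ρ^((2*m-s)*(x:ℕ)) else 0) * B y x)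
      = if s ∈ Dset then (m:ℂ) else -(m:ℂ) := by
    intro s hs
    rw [Finset.mem_range] at hs
    set u : Fin (2*m) → ℂ := fun x => if m ≤ (x:ℕ) then ρ^((2*m-s)*(x:ℕ)) else 0 with hu
    have huval : ∀ x : Fin (2*m), u x = if m ≤ (x:ℕ) then ρ^((2*m-s)*(x:ℕ)) else 0 :=
      fun _ => rfl
    have hdouble : (∑ x : Fin (2*m), ∑ y : Fin (2*m),
        (if m ≤ (x:ℕ) ∧ (y:ℕ) < m then ρ^(s*(y:ℕ)) * ρ^((2*m-s)*(x:ℕ)) else 0) * B y x)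
        = ∑ y : Fin (2*m), (if (y:ℕ) < m then ρ^(s*(y:ℕ)) else 0) * (B.mulVec u) y := by
      rw [Finset.sum_comm]
      refine Finset.sum_congr rfl fun y _ => ?_
      by_cases hy : (y:ℕ) < m
      · rw [if_pos hy, Matrix.mulVec, dotProduct, Finset.mul_sum]
        refine Finset.sum_congr rfl fun x _ => ?_
        by_cases hx : m ≤ (x:ℕ)
        · rw [if_pos ⟨hx, hy⟩, huval x, if_pos hx]; ring
        · rw [if_neg (by tauto), huval x, if_neg hx]; ring
      · rw [if_neg hy, zero_mul]
        exact Finset.sum_eq_zero fun x _ => by rw [if_neg (by tauto), zero_mul]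
    have hAu : ∀ j : Fin (2*m), (A.mulVec u) j
        = a j * ∑ i ∈ Finset.range m, ρ^((d j + (2*m - s)) * (m + i)) := by
      intro j
      rw [Matrix.mulVec, dotProduct]
      have hterm : ∀ x : Fin (2*m), A j x * u x
          = (if m ≤ (x:ℕ) then a j * ρ^((d j + (2*m-s))*(x:ℕ)) else 0) := by
        intro x
        rw [hA, huval x]
        by_cases hx : m ≤ (x:ℕ)
        · rw [if_pos hx, if_pos hx, mul_assoc, ← pow_add]
          congr 2
          ring
        · rw [if_neg hx, if_neg hx, mul_zero]
      rw [Finset.sum_congr rfl fun x _ => hterm x]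
      rw [hsum_ge (fun i => a j * ρ^((d j + (2*m-s))*i)), ← Finset.mul_sum]
    rw [hdouble]
    by_cases hsD : s ∈ Dset
    · -- s = d j₀ with j₀ < m
      rw [if_pos hsD]
      obtain ⟨j₀, hj₀mem, hdj₀⟩ := Finset.mem_image.1 hsD
      have hj₀ : (j₀:ℕ) < m := (Finset.mem_filter.1 hj₀mem).2
      have haj : a j₀ ≠ 0 := ((hab j₀).1 hj₀).2
      have hbj : b j₀ = 0 := ((hab j₀).1 hj₀).1
      have hrow : ∀ y : Fin (2*m), (if (y:ℕ) < m then ρ^(s*(y:ℕ)) else 0)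
          = W j₀ y * (a j₀)⁻¹ := by
        intro y
        rw [hW]
        by_cases hy : (y:ℕ) < m
        · rw [if_pos hy, if_pos hy, ← hdj₀]
          field_simp
          ring
        · rw [if_neg hy, if_neg hy, hbj, zero_mul, zero_mul]
      have hWz : (∑ y : Fin (2*m), W j₀ y * (B.mulVec u) y) = (A.mulVec u) j₀ := by
        have hmv : W.mulVec (B.mulVec u) = A.mulVec u := by
          rw [hB, ← Matrix.mulVec_mulVec, Matrix.mulVec_mulVec,
            Matrix.mul_nonsing_inv W hWinv, Matrix.one_mulVec]
        calc (∑ y : Fin (2*m), W j₀ y * (B.mulVec u) y)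
            = (W.mulVec (B.mulVec u)) j₀ := by rw [Matrix.mulVec, dotProduct]
          _ = (A.mulVec u) j₀ := by rw [hmv]
      calc (∑ y : Fin (2*m), (if (y:ℕ) < m then ρ^(s*(y:ℕ)) else 0) * (B.mulVec u) y)
          = ∑ y : Fin (2*m), (a j₀)⁻¹ * (W j₀ y * (B.mulVec u) y) := by
            refine Finset.sum_congr rfl fun y _ => ?_
            rw [hrow y]; ring
        _ = (a j₀)⁻¹ * ((A.mulVec u) j₀) := by rw [← Finset.mul_sum, hWz]
        _ = (m : ℂ) := by
            rw [hAu j₀]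
            have hc : d j₀ + (2*m - s) = 2*m := by
              have := hdlt j₀
              omega
            rw [hc]
            have : ∀ i ∈ Finset.range m, ρ^(2*m*(m+i)) = 1 := fun i _ => hone' (m+i)
            rw [Finset.sum_congr rfl this, Finset.sum_const, Finset.card_range]
            field_simp
            simp
    · -- s is not one of the d j for j < m
      rw [if_neg hsD]
      have hnd : ∀ j : Fin (2*m), (j:ℕ) < m → d j ≠ s := by
        intro j hj hcon
        exact hsD (Finset.mem_image.2 ⟨j, Finset.mem_filter.2 ⟨Finset.mem_univ _, hj⟩, hcon⟩)
      set yv : Fin (2*m) → ℂ :=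
        fun β => if (β:ℕ) < m then -((-1:ℂ))^s * ρ^(s*m + (2*m-s)*(β:ℕ)) else 0 with hyv
      have hyval : ∀ β : Fin (2*m), yv β
          = if (β:ℕ) < m then -((-1:ℂ))^s * ρ^(s*m + (2*m-s)*(β:ℕ)) else 0 := fun _ => rfl
      have hWyv : W.mulVec yv = A.mulVec u := by
        funext j
        rw [Matrix.mulVec, dotProduct, hAu j]
        have hterm : ∀ y : Fin (2*m), W j y * yv y
            = (if (y:ℕ) < m then
                (-((-1:ℂ))^s * ((-1:ℂ))^s) * (a j * ρ^((d j + (2*m-s))*(y:ℕ))) else 0) := by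
          intro y
          rw [hW, hyval y]
          by_cases hy : (y:ℕ) < m
          · rw [if_pos hy, if_pos hy, if_pos hy]
            have he : (y:ℕ)*(d j) + (s*m + (2*m-s)*(y:ℕ))
                = s*m + (d j + (2*m-s))*(y:ℕ) := by ring
            calc a j * ρ^((y:ℕ)*(d j)) * (-((-1:ℂ))^s * ρ^(s*m + (2*m-s)*(y:ℕ)))
                = -((-1:ℂ))^s * (a j * ρ^((y:ℕ)*(d j) + (s*m + (2*m-s)*(y:ℕ)))) := by
                  rw [pow_add]; ring
              _ = -((-1:ℂ))^s * (a j * (ρ^(s*m) * ρ^((d j + (2*m-s))*(y:ℕ)))) := by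
                  rw [he, pow_add]
              _ = (-((-1:ℂ))^s * ((-1:ℂ))^s) * (a j * ρ^((d j + (2*m-s))*(y:ℕ))) := by
                  rw [hρm_pow s]; ring
          · rw [if_neg hy, if_neg hy, if_neg hy, mul_zero]
        rw [Finset.sum_congr rfl fun y _ => hterm y]
        rw [hsum_lt (fun i => (-((-1:ℂ))^s * ((-1:ℂ))^s) * (a j * ρ^((d j + (2*m-s))*i)))]
        have hsgn : (-((-1:ℂ))^s * ((-1:ℂ))^s) = -1 := by
          have : ((-1:ℂ))^s * ((-1:ℂ))^s = 1 := by
            rw [← pow_add, ← two_mul, pow_mul]; norm_num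
          linear_combination -this
        rw [hsgn]
        by_cases hj : (j:ℕ) < m
        · -- main case
          set t := d j + (2*m - s) with ht
          have htb : 0 < t ∧ t < 4*m ∧ t ≠ 2*m := by
            refine ⟨by omega, by have := hdlt j; omega, ?_⟩
            intro hcon
            exact hnd j hj (by omega)
          have hndvd : ¬ (2*m ∣ t) := by
            rintro ⟨k, hk⟩
            match k, hk with
            | 0, hk => omega
            | 1, hk => omega
            | (k+2), hk =>
              have h5 : 2*m*2 ≤ 2*m*(k+2) := Nat.mul_le_mul_left _ (by omega)
              omega
          have hpows : ∀ i : ℕ, ρ^(t*i) = (ρ^t)^i := fun i => by rw [pow_mul]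
          by_cases hev : 2 ∣ t
          · have hg : (∑ i ∈ Finset.range m, (ρ^t)^i) = 0 := hgeomsum t hndvd hev
            calc (∑ i ∈ Finset.range m, -1 * (a j * ρ^(t*i)))
                = -(a j) * ∑ i ∈ Finset.range m, (ρ^t)^i := by
                  rw [Finset.mul_sum]
                  exact Finset.sum_congr rfl fun i _ => by rw [hpows]; ring
              _ = 0 := by rw [hg, mul_zero]
              _ = a j * ∑ i ∈ Finset.range m, ρ^(t*(m+i)) := by
                  have : (∑ i ∈ Finset.range m, ρ^(t*(m+i)))
                      = ρ^(t*m) * ∑ i ∈ Finset.range m, (ρ^t)^i := by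
                    rw [Finset.mul_sum]
                    exact Finset.sum_congr rfl fun i _ => by
                      rw [← hpows, ← pow_add, Nat.mul_add]
                  rw [this, hg, mul_zero, mul_zero]
          · have hodd : Odd t := Nat.odd_iff.2 (by omega)
            have hneg : ρ^(t*m) = -1 := by rw [hρm_pow t, hodd.neg_one_pow]
            calc (∑ i ∈ Finset.range m, -1 * (a j * ρ^(t*i)))
                = -(a j) * ∑ i ∈ Finset.range m, (ρ^t)^i := by
                  rw [Finset.mul_sum]
                  exact Finset.sum_congr rfl fun i _ => by rw [hpows]; ring
              _ = a j * ∑ i ∈ Finset.range m, ρ^(t*(m+i)) := by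
                  have : (∑ i ∈ Finset.range m, ρ^(t*(m+i)))
                      = ρ^(t*m) * ∑ i ∈ Finset.range m, (ρ^t)^i := by
                    rw [Finset.mul_sum]
                    exact Finset.sum_congr rfl fun i _ => by
                      rw [← hpows, ← pow_add, Nat.mul_add]
                  rw [this, hneg]; ring
        · -- j ≥ m : both sides vanish since a j = 0
          have haj : a j = 0 := ((hab j).2 (Nat.le_of_not_lt hj)).1
          rw [haj]
          simp
      have hzy : B.mulVec u = yv := by
        rw [hB, ← Matrix.mulVec_mulVec, ← hWyv, Matrix.mulVec_mulVec,
          Matrix.nonsing_inv_mul W hWinv, Matrix.one_mulVec]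
      rw [hzy]
      have hterm2 : ∀ y : Fin (2*m), (if (y:ℕ) < m then ρ^(s*(y:ℕ)) else 0) * yv y
          = (if (y:ℕ) < m then (-1:ℂ) else 0) := by
        intro y
        rw [hyval y]
        by_cases hy : (y:ℕ) < m
        · rw [if_pos hy, if_pos hy, if_pos hy]
          have he : s*(y:ℕ) + (s*m + (2*m-s)*(y:ℕ)) = s*m + 2*m*(y:ℕ) := by
            have hs2 : s + (2*m - s) = 2*m := by omega
            calc s*(y:ℕ) + (s*m + (2*m-s)*(y:ℕ)) = s*m + (s + (2*m-s))*(y:ℕ) := by ring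
              _ = s*m + 2*m*(y:ℕ) := by rw [hs2]
          calc ρ^(s*(y:ℕ)) * (-((-1:ℂ))^s * ρ^(s*m + (2*m-s)*(y:ℕ)))
              = -((-1:ℂ))^s * ρ^(s*(y:ℕ) + (s*m + (2*m-s)*(y:ℕ))) := by rw [pow_add]; ring
            _ = -((-1:ℂ))^s * (ρ^(s*m) * ρ^(2*m*(y:ℕ))) := by rw [he, pow_add]
            _ = -((-1:ℂ))^s * ((-1:ℂ))^s := by rw [hρm_pow s, hone' (y:ℕ), mul_one]
            _ = -1 := by
                have h4 : ((-1:ℂ))^s * ((-1:ℂ))^s = 1 := by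
                  rw [← pow_add, ← two_mul, pow_mul]; norm_num
                linear_combination -h4
        · rw [if_neg hy, if_neg hy, if_neg hy, mul_zero]
      rw [Finset.sum_congr rfl fun y _ => hterm2 y]
      rw [hsum_lt (fun _ => (-1:ℂ))]
      rw [Finset.sum_const, Finset.card_range]
      simp
  -- decomposition of P into Fourier rank-one pieces
  have h2m0 : (2*(m:ℂ)) ≠ 0 := by
    simp only [ne_eq, mul_eq_zero]
    push_neg
    exact ⟨two_ne_zero, Nat.cast_ne_zero.2 (by omega)⟩
  have hPd : ∀ x y : Fin (2*m), P x y = (1/(2*(m:ℂ))) * ∑ s ∈ Finset.range (2*m),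
      (s:ℂ) * (if m ≤ (x:ℕ) ∧ (y:ℕ) < m then ρ^(s*(y:ℕ)) * ρ^((2*m-s)*(x:ℕ)) else 0) := by
    intro x y
    rw [hP]
    by_cases h : m ≤ (x:ℕ) ∧ (y:ℕ) < m
    · rw [if_pos h]
      have hxlt : (x:ℕ) < 2*m := x.isLt
      set t : ℕ := (y:ℕ) + 2*m - (x:ℕ) with ht
      have ht1 : 0 < t := by omega
      have ht2 : t < 2*m := by omega
      have hzp : ρ^(((y:ℕ):ℤ) - ((x:ℕ):ℤ)) = ρ^t := by
        have h2 : ((y:ℕ):ℤ) - ((x:ℕ):ℤ) = (t:ℤ) - ((2*m : ℕ):ℤ) := by omega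
        rw [h2, zpow_sub₀ hρ0, zpow_natCast, zpow_natCast, hone, div_one]
      rw [hzp]
      have hterm : ∀ s ∈ Finset.range (2*m),
          (s:ℂ) * (if m ≤ (x:ℕ) ∧ (y:ℕ) < m then ρ^(s*(y:ℕ)) * ρ^((2*m-s)*(x:ℕ)) else 0)
          = (s:ℂ) * (ρ^t)^s := by
        intro s hs
        rw [Finset.mem_range] at hs
        rw [if_pos h]
        congr 1
        have hkey : s*(y:ℕ) + (2*m - s)*(x:ℕ) + 2*m*s = t*s + 2*m*(x:ℕ) := by
          zify [Nat.le_of_lt hs, show (x:ℕ) ≤ (y:ℕ) + 2*m by omega]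
          rw [show ((t:ℕ):ℤ) = ((y:ℕ):ℤ) + 2*(m:ℤ) - ((x:ℕ):ℤ) by omega]
          ring
        calc ρ^(s*(y:ℕ)) * ρ^((2*m-s)*(x:ℕ))
            = ρ^(s*(y:ℕ) + (2*m-s)*(x:ℕ)) * ρ^(2*m*s) := by
              rw [hone' s, mul_one, pow_add]
          _ = ρ^(t*s + 2*m*(x:ℕ)) := by rw [← pow_add, hkey]
          _ = ρ^(t*s) := by rw [pow_add, hone', mul_one]
          _ = (ρ^t)^s := by rw [pow_mul]
      rw [Finset.sum_congr rfl hterm]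
      have hndvd : ¬ (2*m ∣ t) := by
        intro hdvd
        have := Nat.le_of_dvd ht1 hdvd
        omega
      rw [hweight t hndvd]
      have hsub : ρ^t - 1 ≠ 0 := sub_ne_zero.2 (hmod t hndvd)
      field_simp
      rw [div_self (Nat.cast_ne_zero.2 (by omega))]
    · rw [if_neg h]
      have : ∀ s ∈ Finset.range (2*m),
          (s:ℂ) * (if m ≤ (x:ℕ) ∧ (y:ℕ) < m then ρ^(s*(y:ℕ)) * ρ^((2*m-s)*(x:ℕ)) else 0)
          = 0 := fun s _ => by rw [if_neg h, mul_zero]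
      rw [Finset.sum_congr rfl this, Finset.sum_const, smul_zero, mul_zero]
  -- expand the trace
  have htrace : Matrix.trace (P * W⁻¹ * A)
      = ∑ x : Fin (2*m), ∑ y : Fin (2*m), P x y * B y x := by
    rw [Matrix.mul_assoc, ← hB, Matrix.trace]
    exact Finset.sum_congr rfl fun x _ => by rw [Matrix.diag_apply, Matrix.mul_apply]
  rw [htrace]
  have hstep2 : (∑ x : Fin (2*m), ∑ y : Fin (2*m), P x y * B y x)
      = (1/(2*(m:ℂ))) * ∑ s ∈ Finset.range (2*m), (s:ℂ) *
          (∑ x : Fin (2*m), ∑ y : Fin (2*m),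
            (if m ≤ (x:ℕ) ∧ (y:ℕ) < m then ρ^(s*(y:ℕ)) * ρ^((2*m-s)*(x:ℕ)) else 0) * B y x) := by
    have h1 : (∑ x : Fin (2*m), ∑ y : Fin (2*m), P x y * B y x)
        = ∑ x : Fin (2*m), ∑ y : Fin (2*m), ∑ s ∈ Finset.range (2*m),
            ((1/(2*(m:ℂ))) * (s:ℂ)) *
            ((if m ≤ (x:ℕ) ∧ (y:ℕ) < m then ρ^(s*(y:ℕ)) * ρ^((2*m-s)*(x:ℕ)) else 0) * B y x) := by
      refine Finset.sum_congr rfl fun x _ => Finset.sum_congr rfl fun y _ => ?_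
      rw [hPd x y, Finset.mul_sum, Finset.sum_mul]
      exact Finset.sum_congr rfl fun s _ => by ring
    rw [h1]
    have h2 : ∀ x : Fin (2*m), (∑ y : Fin (2*m), ∑ s ∈ Finset.range (2*m),
            ((1/(2*(m:ℂ))) * (s:ℂ)) *
            ((if m ≤ (x:ℕ) ∧ (y:ℕ) < m then ρ^(s*(y:ℕ)) * ρ^((2*m-s)*(x:ℕ)) else 0) * B y x))
        = ∑ s ∈ Finset.range (2*m), ∑ y : Fin (2*m),
            ((1/(2*(m:ℂ))) * (s:ℂ)) *
            ((if m ≤ (x:ℕ) ∧ (y:ℕ) < m then ρ^(s*(y:ℕ)) * ρ^((2*m-s)*(x:ℕ)) else 0) * B y x) :=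
      fun x => Finset.sum_comm
    rw [Finset.sum_congr rfl fun x _ => h2 x, Finset.sum_comm, Finset.mul_sum]
    refine Finset.sum_congr rfl fun s _ => ?_
    simp only [← Finset.mul_sum]
    ring
  rw [hstep2, Finset.sum_congr rfl fun s hs => by rw [hT s hs]]
  -- evaluate the resulting explicit sum
  have hsub : Dset ⊆ Finset.range (2*m) := by
    intro s hsmem
    obtain ⟨j, _, rfl⟩ := Finset.mem_image.1 hsmem
    exact Finset.mem_range.2 (hdlt j)
  have hsplit : (∑ s ∈ Finset.range (2*m), (s:ℂ) * (if s ∈ Dset then (m:ℂ) else -(m:ℂ)))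
      = 2*(m:ℂ) * (∑ s ∈ Dset, (s:ℂ)) - (m:ℂ) * ∑ s ∈ Finset.range (2*m), (s:ℂ) := by
    have hterm : ∀ s : ℕ, (s:ℂ) * (if s ∈ Dset then (m:ℂ) else -(m:ℂ))
        = (if s ∈ Dset then 2*(m:ℂ)*(s:ℂ) else 0) - (m:ℂ) * (s:ℂ) := by
      intro s
      by_cases h : s ∈ Dset
      · rw [if_pos h, if_pos h]; ring
      · rw [if_neg h, if_neg h]; ring
    rw [Finset.sum_congr rfl fun s _ => hterm s, Finset.sum_sub_distrib]
    congr 1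
    · rw [Finset.sum_ite_mem, Finset.inter_eq_right.2 hsub, Finset.mul_sum]
    · rw [Finset.mul_sum]
  rw [hsplit]
  have hDsum : (∑ s ∈ Dset, (s:ℂ))
      = ∑ j ∈ Finset.univ.filter (fun j : Fin (2*m) => (j:ℕ) < m), (d j : ℂ) := by
    rw [hDset]
    exact Finset.sum_image fun x _ y _ h => hd h
  have hRsum : (∑ s ∈ Finset.range (2*m), (s:ℂ)) = (m:ℂ) * (2*(m:ℂ) - 1) := by
    have h := Finset.sum_range_id_mul_two (2*m)
    have h2 : ((∑ i ∈ Finset.range (2*m), (i:ℕ) : ℕ) : ℂ) * 2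
        = ((2*m : ℕ) : ℂ) * (((2*m - 1 : ℕ)) : ℂ) := by exact_mod_cast congrArg Nat.cast h
    push_cast [Nat.cast_sub (show 1 ≤ 2*m by omega)] at h2
    linear_combination h2 / 2
  rw [hDsum, hRsum]
  have hm0 : (m:ℂ) ≠ 0 := Nat.cast_ne_zero.2 (by omega)
  field_simp
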